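/- Part of the four-dimensional index theorem (Cardy form): Let I range over a finite index set, and let G₀ and d_I, 𝔫_I, Δ_I be real numbers. Define logZβ := −[ (π²/3)·G₀ + Σ_I d_I(𝔫_I − 1)F′(Δ_I) ], c_r := −3[ G₀ + Σ_I d_I(𝔫_I − 1)(Δ_I/π − 1)² ], k := −G₀ − Σ_I d_I(𝔫_I − 1), and c_l := c_r − k. Then logZβ = (π²/6)·c_l. -/

import Mathlib

open Real

/-- `F′(u) = u²/2 − π u + π²/3`, the derivative of the paper's function `F = g₊`. -/
noncomputable def Fprime (u : ℝ) : ℝ := u ^ 2 / 2 - π * u + π ^ 2 / 3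

/-- Part of the four-dimensional index theorem (Cardy form):
`logZβ = (π²/6)·c_l`. -/
theorem stmt0 {ι : Type*} [Fintype ι] (G₀ : ℝ) (d n Δ : ι → ℝ)
    (logZβ cr k cl : ℝ)
    (hlogZ : logZβ = -((π ^ 2 / 3) * G₀ + ∑ i, d i * (n i - 1) * Fprime (Δ i)))
    (hcr : cr = -3 * (G₀ + ∑ i, d i * (n i - 1) * (Δ i / π - 1) ^ 2))
    (hk : k = -G₀ - ∑ i, d i * (n i - 1))
    (hcl : cl = cr - k) :
    logZβ = π ^ 2 / 6 * cl := by
  have hπ : (π : ℝ) ≠ 0 := Real.pi_ne_zero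
  have key : ∀ i, d i * (n i - 1) * Fprime (Δ i)
      = π ^ 2 / 2 * (d i * (n i - 1) * (Δ i / π - 1) ^ 2)
        - π ^ 2 / 6 * (d i * (n i - 1)) := by
    intro i
    unfold Fprime
    field_simp [Fprime]
    ring
  subst hlogZ hcr hk hcl
  rw [Finset.sum_congr rfl (fun i _ => key i), Finset.sum_sub_distrib,
    ← Finset.mul_sum, ← Finset.mul_sum]
  ring
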